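/- Let F be a field, n ≥ 3, and let g = (V,[,]) be an n-dimensional algebra satisfying [x,x] = 0 for all x, the metabelian identity [[x,y],z] = 0 for all x,y,z, and dim_F ann(g) = n-2, where ann(g) is the two-sided annihilator. Then g is isomorphic to h_n, the direct sum of the 3-dimensional Heisenberg Lie algebra with the (n-3)-dimensional abelian Lie algebra. -/

import Mathlib

open scoped BigOperators

/-- an `n`-dimensional algebra (`n ≥ 3`) with `[x,x] = 0`, satisfying the
metabelian identity `[[x,y],z] = 0` (and `[z,[x,y]] = 0`), whose two-sided annihilator
has dimension `n-2`, is isomorphic to `h_n`: it admits a basis whose only nonzero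
products are `[b₀,b₁] = b₂ = -[b₁,b₀]`. -/
theorem metabelian_skew_iso_heisenberg {F V : Type*} [Field F] [AddCommGroup V]
    [Module F V] [FiniteDimensional F V] {n : ℕ} (hn : 3 ≤ n)
    (hV : Module.finrank F V = n)
    (B : V →ₗ[F] V →ₗ[F] V)
    (hskew : ∀ x : V, B x x = 0)
    (hmeta : ∀ x y z : V, B (B x y) z = 0)
    (W : Submodule F V)
    (hW : (W : Set V) = {c | ∀ a : V, B c a = 0 ∧ B a c = 0})
    (hdim : Module.finrank F W = n - 2) :
    ∃ b : Module.Basis (Fin n) F V, ∀ i j : Fin n,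
      B (b i) (b j) =
        if i = (⟨0, by omega⟩ : Fin n) ∧ j = (⟨1, by omega⟩ : Fin n) then
          b (⟨2, by omega⟩ : Fin n)
        else if i = (⟨1, by omega⟩ : Fin n) ∧ j = (⟨0, by omega⟩ : Fin n) then
          -b (⟨2, by omega⟩ : Fin n)
        else 0 := by
  classical
  -- skew-symmetry
  have hs : ∀ a c : V, B c a = -B a c := by
    intro a c
    have h := hskew (a + c)
    simp only [map_add, LinearMap.add_apply, hskew, zero_add, add_zero] at h
    exact eq_neg_of_add_eq_zero_left h
  -- membership in W means annihilation
  have hmemW : ∀ {v : V}, v ∈ W → ∀ a : V, B v a = 0 ∧ B a v = 0 := by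
    intro v hv a
    have : v ∈ ({c | ∀ a : V, B c a = 0 ∧ B a c = 0} : Set V) := hW ▸ hv
    exact this a
  have hmemW' : ∀ {v : V}, (∀ a : V, B v a = 0 ∧ B a v = 0) → v ∈ W := by
    intro v hv
    have : v ∈ ({c | ∀ a : V, B c a = 0 ∧ B a c = 0} : Set V) := hv
    rwa [← SetLike.mem_coe, hW]
  -- complement W' of W
  obtain ⟨W', hWW'⟩ := Submodule.exists_isCompl W
  have hrk' : Module.finrank F W' = 2 := by
    have := Submodule.finrank_add_eq_of_isCompl hWW'
    rw [hdim, hV] at this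
    omega
  let u : Module.Basis (Fin 2) F W' := Module.finBasisOfFinrankEq F W' hrk'
  set x : V := (u 0 : V) with hxdef
  set y : V := (u 1 : V) with hydef
  set z : V := B x y with hzdef
  -- W' ≤ span {x, y}
  have hW'span : (W' : Submodule F V) ≤ Submodule.span F {x, y} := by
    intro v hv
    have h1 : (⟨v, hv⟩ : W') ∈ Submodule.span F (Set.range u) := by
      rw [u.span_eq]; trivial
    have h2 : W'.subtype ⟨v, hv⟩ ∈
        Submodule.map W'.subtype (Submodule.span F (Set.range u)) :=
      ⟨_, h1, rfl⟩
    rw [Submodule.map_span] at h2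
    refine Submodule.span_le.mpr ?_ h2
    rintro _ ⟨_, ⟨i, rfl⟩, rfl⟩
    fin_cases i
    · exact Submodule.subset_span (Or.inl rfl)
    · exact Submodule.subset_span (Or.inr rfl)
  -- z ∈ W since all products are in W
  have hzW : z ∈ W := by
    refine hmemW' (fun a => ⟨hmeta x y a, ?_⟩)
    rw [hs, hmeta x y a, neg_zero]
  -- z ≠ 0
  have hzne : z ≠ 0 := by
    intro hz0
    have hxW : x ∈ W := by
      refine hmemW' (fun a => ?_)
      have hBx : ∀ a : V, B x a = 0 := by
        have hker : (⊤ : Submodule F V) ≤ LinearMap.ker (B x) := by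
          rw [← hWW'.sup_eq_top]
          refine sup_le (fun w hw => ?_) (le_trans hW'span ?_)
          · exact LinearMap.mem_ker.mpr (hmemW hw x).2
          · refine Submodule.span_le.mpr ?_
            rintro w (rfl | rfl)
            · exact LinearMap.mem_ker.mpr (hskew x)
            · exact LinearMap.mem_ker.mpr (hzdef ▸ hz0)
        intro a; exact LinearMap.mem_ker.mp (hker trivial)
      exact ⟨hBx a, by rw [hs, hBx a, neg_zero]⟩
    have hyW : y ∈ W := by
      refine hmemW' (fun a => ?_)
      have hBy : ∀ a : V, B y a = 0 := by
        have hker : (⊤ : Submodule F V) ≤ LinearMap.ker (B y) := by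
          rw [← hWW'.sup_eq_top]
          refine sup_le (fun w hw => ?_) (le_trans hW'span ?_)
          · exact LinearMap.mem_ker.mpr (hmemW hw y).2
          · refine Submodule.span_le.mpr ?_
            rintro w (rfl | rfl)
            · refine LinearMap.mem_ker.mpr ?_
              rw [hs x y, ← hzdef, hz0, neg_zero]
            · exact LinearMap.mem_ker.mpr (hskew y)
        intro a; exact LinearMap.mem_ker.mp (hker trivial)
      exact ⟨hBy a, by rw [hs, hBy a, neg_zero]⟩
    have hWtop : W = ⊤ := by
      rw [eq_top_iff, ← hWW'.sup_eq_top]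
      refine sup_le le_rfl (le_trans hW'span (Submodule.span_le.mpr ?_))
      rintro w (rfl | rfl)
      · exact hxW
      · exact hyW
    have : Module.finrank F W = n := by rw [hWtop, finrank_top, hV]
    omega
  -- split W as span{z} ⊕ C
  set zW : W := ⟨z, hzW⟩ with hzWdef
  have hzWne : zW ≠ 0 := fun h => hzne (by simpa [hzWdef] using congrArg Subtype.val h)
  set U : Submodule F W := Submodule.span F {zW} with hUdef
  obtain ⟨C, hUC⟩ := Submodule.exists_isCompl U
  have hrkU : Module.finrank F U = 1 := finrank_span_singleton hzWne
  have hrkC : Module.finrank F C = n - 3 := by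
    have := Submodule.finrank_add_eq_of_isCompl hUC
    rw [hrkU, hdim] at this
    omega
  let cb : Module.Basis (Fin (n - 3)) F C := Module.finBasisOfFinrankEq F C hrkC
  -- the candidate basis vectors
  set b : Fin n → V := fun i =>
    if _ : i.1 = 0 then x
    else if _ : i.1 = 1 then y
    else if _ : i.1 = 2 then z
    else (((cb ⟨i.1 - 3, by omega⟩ : C) : W) : V) with hbdef
  have hb0 : b ⟨0, by omega⟩ = x := by simp [hbdef]
  have hb1 : b ⟨1, by omega⟩ = y := by simp [hbdef]
  have hb2 : b ⟨2, by omega⟩ = z := by simp [hbdef]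
  have hb3 : ∀ (k : Fin (n - 3)), b ⟨k.1 + 3, by omega⟩ = (((cb k : C) : W) : V) := by
    intro k
    have h0 : (⟨k.1 + 3, by omega⟩ : Fin n).1 ≠ 0 := by simp
    have h1 : (⟨k.1 + 3, by omega⟩ : Fin n).1 ≠ 1 := by simp
    have h2 : (⟨k.1 + 3, by omega⟩ : Fin n).1 ≠ 2 := by simp
    simp only [hbdef, dif_neg h0, dif_neg h1, dif_neg h2]
    try simp
  -- membership facts
  have hbW : ∀ i : Fin n, 2 ≤ i.1 → b i ∈ W := by
    intro i hi
    by_cases h2 : i.1 = 2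
    · have : i = ⟨2, by omega⟩ := Fin.ext h2
      rw [this, hb2]; exact hzW
    · have hi3 : 3 ≤ i.1 := by omega
      have : i = ⟨(⟨i.1 - 3, by omega⟩ : Fin (n-3)).1 + 3, by omega⟩ := by
        ext; simp; omega
      rw [this, hb3]
      exact ((cb ⟨i.1 - 3, by omega⟩ : C) : W).2
  -- spanning
  have hWle : W ≤ Submodule.span F (Set.range b) := by
    intro v hv
    have hmem : (⟨v, hv⟩ : W) ∈ U ⊔ C := by rw [hUC.sup_eq_top]; trivial
    rcases Submodule.mem_sup.mp hmem with ⟨p, hp, q, hq, hpq⟩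
    have hv' : v = (p : V) + (q : V) := by
      have := congrArg (W.subtype) hpq
      simpa using this.symm
    rw [hv']
    refine Submodule.add_mem _ ?_ ?_
    · -- p ∈ span {zW}
      rcases Submodule.mem_span_singleton.mp hp with ⟨s, rfl⟩
      have : ((s • zW : W) : V) = s • z := rfl
      rw [this]
      refine Submodule.smul_mem _ _ (Submodule.subset_span ⟨⟨2, by omega⟩, hb2⟩)
    · -- q ∈ C
      have h1 : (⟨q, hq⟩ : C) ∈ Submodule.span F (Set.range cb) := by
        rw [cb.span_eq]; trivial
      set f : C →ₗ[F] V := W.subtype.comp C.subtype with hfdef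
      have h2 : f ⟨q, hq⟩ ∈ Submodule.map f (Submodule.span F (Set.range cb)) :=
        ⟨_, h1, rfl⟩
      rw [Submodule.map_span] at h2
      have h3 : (q : V) = f ⟨q, hq⟩ := rfl
      rw [h3]
      refine Submodule.span_le.mpr ?_ h2
      rintro _ ⟨_, ⟨k, rfl⟩, rfl⟩
      exact Submodule.subset_span ⟨⟨k.1 + 3, by omega⟩, hb3 k⟩
  have hW'le : W' ≤ Submodule.span F (Set.range b) := by
    refine le_trans hW'span (Submodule.span_le.mpr ?_)
    rintro w (rfl | rfl)
    · exact Submodule.subset_span ⟨⟨0, by omega⟩, hb0⟩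
    · exact Submodule.subset_span ⟨⟨1, by omega⟩, hb1⟩
  have htop : ⊤ ≤ Submodule.span F (Set.range b) := by
    rw [← hWW'.sup_eq_top]
    exact sup_le hWle hW'le
  have hcard : Fintype.card (Fin n) = Module.finrank F V := by
    rw [Fintype.card_fin, hV]
  have hBxy : B x y = b ⟨2, by omega⟩ := by rw [hb2]
  have hByx : B y x = -b ⟨2, by omega⟩ := by rw [hs x y, hBxy]
  have hBxx : B x x = 0 := hskew x
  have hByy : B y y = 0 := hskew y
  clear hbdef hb2 hb3 hzdef hzWdef hUdef hxdef hydef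
  clear_value b zW U
  refine ⟨basisOfTopLeSpanOfCardEqFinrank b htop hcard, ?_⟩
  intro i j
  simp only [coe_basisOfTopLeSpanOfCardEqFinrank]
  by_cases hi2 : 2 ≤ i.1
  · have h0 : B (b i) (b j) = 0 := (hmemW (hbW i hi2) (b j)).1
    have h1 : i.1 ≠ 0 := by omega
    have h2 : i.1 ≠ 1 := by omega
    simp [h0, Fin.ext_iff, h1, h2]
  · by_cases hj2 : 2 ≤ j.1
    · have h0 : B (b i) (b j) = 0 := (hmemW (hbW j hj2) (b i)).2
      have h1 : j.1 ≠ 0 := by omega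
      have h2 : j.1 ≠ 1 := by omega
      simp [h0, Fin.ext_iff, h1, h2]
    · have hi01 : i.1 = 0 ∨ i.1 = 1 := by omega
      have hj01 : j.1 = 0 ∨ j.1 = 1 := by omega
      rcases hi01 with hi | hi <;> rcases hj01 with hj | hj
      · have hieq : i = ⟨0, by omega⟩ := Fin.ext hi
        have hjeq : j = ⟨0, by omega⟩ := Fin.ext hj
        simp only [hieq, hjeq, hb0]
        simp [Fin.ext_iff, hBxx]
      · have hieq : i = ⟨0, by omega⟩ := Fin.ext hi
        have hjeq : j = ⟨1, by omega⟩ := Fin.ext hj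
        simp only [hieq, hjeq, hb0, hb1]
        simp [Fin.ext_iff, hBxy]
      · have hieq : i = ⟨1, by omega⟩ := Fin.ext hi
        have hjeq : j = ⟨0, by omega⟩ := Fin.ext hj
        simp only [hieq, hjeq, hb0, hb1]
        simp [Fin.ext_iff, hByx]
      · have hieq : i = ⟨1, by omega⟩ := Fin.ext hi
        have hjeq : j = ⟨1, by omega⟩ := Fin.ext hj
        simp only [hieq, hjeq, hb1]
        simp [Fin.ext_iff, hByy]
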